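/- Fix d ≥ 3. In the polynomial ring ℂ[κ_1,…,κ_d], let K be the 2×(d−1) matrix whose (1,c) entry is κ_c/(c−1)! and whose (2,c) entry is κ_{c+1}/c!, for c = 1,…,d−1. Then the ideal I_2(K) generated by the 2×2 minors of K is prime, and it equals the vanishing ideal of the image of the gamma cumulant parameterization ℂ² → ℂ^d, (k, θ) ↦ ((r−1)!·k·θ^r)_{r=1,…,d}; that is, a polynomial f ∈ ℂ[κ_1,…,κ_d] vanishes at (0!·kθ, 1!·kθ², …, (d−1)!·kθ^d) for all k, θ ∈ ℂ if and only if f ∈ I_2(K). -/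

import Mathlib

open MvPolynomial

/-- The `2 × (d-1)` matrix `K` of the gamma cumulant variety, in `ℂ[κ₁,…,κ_d]`
(variable `i : Fin d` corresponds to `κ_{i+1}`): its `c`-th column, for `1 ≤ c ≤ d-1`,
is `(κ_c/(c-1)!, κ_{c+1}/c!)ᵀ`. -/
noncomputable def gammaCumulantMatrix (d : ℕ) :
    Matrix (Fin 2) (Fin (d - 1)) (MvPolynomial (Fin d) ℂ) :=
  Matrix.of fun r c =>
    ![C (((c.val.factorial : ℂ))⁻¹) * X ⟨c.val, by have := c.isLt; omega⟩,
      C ((((c.val + 1).factorial : ℂ))⁻¹) * X ⟨c.val + 1, by have := c.isLt; omega⟩] r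

/-- The ideal `I₂(K)` generated by all `2 × 2` minors of `K`. -/
noncomputable def gammaCumulantIdeal (d : ℕ) : Ideal (MvPolynomial (Fin d) ℂ) :=
  Ideal.span
    { p | ∃ s : Fin 2 → Fin (d - 1), StrictMono s ∧
        p = ((gammaCumulantMatrix d).submatrix id s).det }

namespace GammaAux

variable {d : ℕ}

/-- The parameterization map `X i ↦ i! · k · θ^(i+1)`. -/
noncomputable def gm (d : ℕ) : MvPolynomial (Fin d) ℂ →ₐ[ℂ] MvPolynomial (Fin 2) ℂ :=
  aeval fun i : Fin d => C (i.val.factorial : ℂ) * X 0 * X 1 ^ (i.val + 1)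

def mdeg (σ : Fin d →₀ ℕ) : ℕ := ∑ i, σ i
def wt (σ : Fin d →₀ ℕ) : ℕ := ∑ i, i.val * σ i
def Phi (σ : Fin d →₀ ℕ) : ℕ := ∑ i, i.val ^ 2 * σ i

noncomputable def nu (σ : Fin d →₀ ℕ) : ℂ := ∏ i, ((i.val.factorial : ℂ) ^ σ i)⁻¹
noncomputable def P (σ : Fin d →₀ ℕ) : MvPolynomial (Fin d) ℂ := monomial σ (nu σ)

lemma nu_ne_zero (σ : Fin d →₀ ℕ) : nu σ ≠ 0 := by
  refine Finset.prod_ne_zero_iff.2 fun i _ => ?_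
  exact inv_ne_zero (pow_ne_zero _ (Nat.cast_ne_zero.2 (Nat.factorial_ne_zero _)))

lemma nu_mul_fact (σ : Fin d →₀ ℕ) :
    nu σ * ∏ i, (i.val.factorial : ℂ) ^ σ i = 1 := by
  rw [nu, ← Finset.prod_mul_distrib]
  refine Finset.prod_eq_one fun i _ => ?_
  exact inv_mul_cancel₀ (pow_ne_zero _ (Nat.cast_ne_zero.2 (Nat.factorial_ne_zero _)))

lemma gm_monomial (σ : Fin d →₀ ℕ) (c : ℂ) :
    gm d (monomial σ c) =
      C (c * ∏ i, (i.val.factorial : ℂ) ^ σ i) * X 0 ^ mdeg σ * X 1 ^ (mdeg σ + wt σ) := by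
  rw [gm, aeval_monomial, Finsupp.prod_fintype _ _ (fun i => pow_zero _)]
  have h1 : ∀ i ∈ Finset.univ, (C (i.val.factorial : ℂ) * X (0 : Fin 2) * X 1 ^ (i.val + 1)) ^ σ i
      = C ((i.val.factorial : ℂ) ^ σ i) * X 0 ^ σ i * X 1 ^ ((i.val + 1) * σ i) := by
    intro i _; rw [mul_pow, mul_pow, ← C_pow, ← pow_mul]
  rw [Finset.prod_congr rfl h1, Finset.prod_mul_distrib, Finset.prod_mul_distrib,
    Finset.prod_pow_eq_pow_sum, Finset.prod_pow_eq_pow_sum]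
  have h2 : (∑ i : Fin d, (i.val + 1) * σ i) = mdeg σ + wt σ := by
    simp only [mdeg, wt, add_mul, one_mul, Finset.sum_add_distrib]
    omega
  rw [h2, algebraMap_eq, ← map_prod (C : ℂ →+* MvPolynomial (Fin 2) ℂ)]
  rw [show (∑ i : Fin d, σ i) = mdeg σ from rfl, C_mul]
  ring

lemma gm_P (σ : Fin d →₀ ℕ) :
    gm d (P σ) = X 0 ^ mdeg σ * X 1 ^ (mdeg σ + wt σ) := by
  rw [P, gm_monomial, nu_mul_fact, map_one, one_mul]


lemma mdeg_add (σ τ : Fin d →₀ ℕ) : mdeg (σ + τ) = mdeg σ + mdeg τ := by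
  simp [mdeg, Finset.sum_add_distrib]

lemma wt_add (σ τ : Fin d →₀ ℕ) : wt (σ + τ) = wt σ + wt τ := by
  simp [wt, mul_add, Finset.sum_add_distrib]

lemma Phi_add (σ τ : Fin d →₀ ℕ) : Phi (σ + τ) = Phi σ + Phi τ := by
  simp [Phi, mul_add, Finset.sum_add_distrib]

lemma mdeg_single (a : Fin d) (n : ℕ) : mdeg (Finsupp.single a n) = n := by
  rw [mdeg, Finset.sum_eq_single a]
  · simp
  · intro j _ hj; simp [Finsupp.single_eq_of_ne' (Ne.symm hj)]
  · simp

lemma wt_single (a : Fin d) (n : ℕ) : wt (Finsupp.single a n) = a.val * n := by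
  rw [wt, Finset.sum_eq_single a]
  · simp
  · intro j _ hj; simp [Finsupp.single_eq_of_ne' (Ne.symm hj)]
  · simp

lemma Phi_single (a : Fin d) (n : ℕ) : Phi (Finsupp.single a n) = a.val ^ 2 * n := by
  rw [Phi, Finset.sum_eq_single a]
  · simp
  · intro j _ hj; simp [Finsupp.single_eq_of_ne' (Ne.symm hj)]
  · simp

lemma nu_add (σ τ : Fin d →₀ ℕ) : nu (σ + τ) = nu σ * nu τ := by
  simp only [nu, Finsupp.add_apply, pow_add, mul_inv, Finset.prod_mul_distrib]

lemma P_add (σ τ : Fin d →₀ ℕ) : P (σ + τ) = P σ * P τ := by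
  rw [P, P, P, monomial_mul, nu_add]

lemma nu_single (a : Fin d) (n : ℕ) : nu (Finsupp.single a n) = ((a.val.factorial : ℂ) ^ n)⁻¹ := by
  rw [nu, Finset.prod_eq_single a]
  · simp
  · intro j _ hj; simp [Finsupp.single_eq_of_ne' (Ne.symm hj)]
  · simp

lemma P_single_one (a : Fin d) : P (Finsupp.single a 1) = C ((a.val.factorial : ℂ))⁻¹ * X a := by
  rw [P, nu_single, pow_one, C_mul_X_eq_monomial]

/-- the pair monomial `X_a X_b`, normalized -/
lemma P_pair (a b : Fin d) :
    P (Finsupp.single a 1 + Finsupp.single b 1)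
      = (C ((a.val.factorial : ℂ))⁻¹ * X a) * (C ((b.val.factorial : ℂ))⁻¹ * X b) := by
  rw [P_add, P_single_one, P_single_one]


lemma gen_mem {a b : Fin d} (ha : 1 ≤ a.val) (hb : b.val + 1 < d) (hab : a.val ≤ b.val) :
    P (Finsupp.single a 1 + Finsupp.single b 1)
      - P (Finsupp.single (⟨a.val - 1, by omega⟩ : Fin d) 1
            + Finsupp.single (⟨b.val + 1, by omega⟩ : Fin d) 1)
      ∈ gammaCumulantIdeal d := by
  have hmem : P (Finsupp.single (⟨a.val - 1, by omega⟩ : Fin d) 1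
        + Finsupp.single (⟨b.val + 1, by omega⟩ : Fin d) 1)
      - P (Finsupp.single a 1 + Finsupp.single b 1) ∈ gammaCumulantIdeal d := by
    apply Ideal.subset_span
    refine ⟨![⟨a.val - 1, by omega⟩, ⟨b.val, by omega⟩], ?_, ?_⟩
    · intro i j hij
      fin_cases i <;> fin_cases j <;>
        simp_all [Fin.lt_def] <;> omega
    · rw [Matrix.det_fin_two]
      simp only [Matrix.submatrix_apply, id_eq, gammaCumulantMatrix, Matrix.of_apply,
        Matrix.cons_val_zero, Matrix.cons_val_one, Matrix.head_cons]
      rw [P_pair, P_pair]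
      have e1 : (⟨a.val - 1 + 1, by omega⟩ : Fin d) = a := Fin.ext (by simp; omega)
      have e2 : a.val - 1 + 1 = a.val := by omega
      simp only [Fin.val_mk, e2, e1, Fin.eta]
      ring
  have := neg_mem hmem
  rwa [neg_sub] at this


lemma step {a b : Fin d} (ha : 1 ≤ a.val) (hb : b.val + 1 < d) (hab : a.val ≤ b.val)
    {σ : Fin d →₀ ℕ} (hle : Finsupp.single a 1 + Finsupp.single b 1 ≤ σ) :
    ∃ σ' : Fin d →₀ ℕ, (P σ - P σ' ∈ gammaCumulantIdeal d) ∧ mdeg σ' = mdeg σ ∧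
      wt σ' = wt σ ∧ Phi σ < Phi σ' := by
  obtain ⟨ρ, hσ⟩ : ∃ ρ, σ = ρ + (Finsupp.single a 1 + Finsupp.single b 1) :=
    ⟨σ - (Finsupp.single a 1 + Finsupp.single b 1), (tsub_add_cancel_of_le hle).symm⟩
  subst hσ
  refine ⟨ρ + (Finsupp.single (⟨a.val - 1, by omega⟩ : Fin d) 1
      + Finsupp.single (⟨b.val + 1, by omega⟩ : Fin d) 1), ?_, ?_, ?_, ?_⟩
  · rw [P_add ρ (Finsupp.single a 1 + Finsupp.single b 1), P_add ρ, ← mul_sub]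
    exact Ideal.mul_mem_left _ _ (gen_mem ha hb hab)
  · simp [mdeg_add, mdeg_single]
  · simp only [wt_add, wt_single, Fin.val_mk, mul_one]
    omega
  · simp only [Phi_add, Phi_single, Fin.val_mk, mul_one]
    obtain ⟨a1, ha1⟩ : ∃ a1, a.val = a1 + 1 := ⟨a.val - 1, by omega⟩
    rw [ha1] at hab ⊢
    simp only [Nat.add_sub_cancel]
    nlinarith [hab]

/-- Irreducible (normal-form) exponent vectors. -/
def Irred (σ : Fin d →₀ ℕ) : Prop :=
  ∀ a b : Fin d, 1 ≤ a.val → a.val + 1 < d → 1 ≤ b.val → b.val + 1 < d →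
    1 ≤ σ a → 1 ≤ σ b → a = b ∧ σ a = 1

lemma pair_le_of_ne {a b : Fin d} {σ : Fin d →₀ ℕ} (hab : a ≠ b)
    (ha : 1 ≤ σ a) (hb : 1 ≤ σ b) : Finsupp.single a 1 + Finsupp.single b 1 ≤ σ := by
  rw [Finsupp.le_iff]
  intro i _
  simp only [Finsupp.add_apply, Finsupp.single_apply]
  split_ifs with h1 h2 h2
  · exact absurd (h1.trans h2.symm) hab
  · rw [← h1]; simpa using ha
  · rw [← h2]; simpa using hb
  · simp

lemma pair_le_of_two {a : Fin d} {σ : Fin d →₀ ℕ} (ha : 2 ≤ σ a) :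
    Finsupp.single a 1 + Finsupp.single a 1 ≤ σ := by
  rw [Finsupp.le_iff]
  intro i _
  simp only [Finsupp.add_apply, Finsupp.single_apply]
  split_ifs with h1
  · rw [← h1]; simpa using ha
  · simp

lemma Phi_le (σ : Fin d →₀ ℕ) : Phi σ ≤ (d - 1) * wt σ := by
  rw [Phi, wt, Finset.mul_sum]
  refine Finset.sum_le_sum fun i _ => ?_
  have hi : i.val ≤ d - 1 := by have := i.isLt; omega
  calc i.val ^ 2 * σ i = i.val * (i.val * σ i) := by ring
    _ ≤ (d - 1) * (i.val * σ i) := Nat.mul_le_mul_right _ hi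

lemma exists_move_of_not_irred {σ : Fin d →₀ ℕ} (h : ¬ Irred σ) :
    ∃ a b : Fin d, 1 ≤ a.val ∧ b.val + 1 < d ∧ a.val ≤ b.val ∧
      Finsupp.single a 1 + Finsupp.single b 1 ≤ σ := by
  rw [Irred] at h
  push_neg at h
  obtain ⟨a, b, ha1, ha2, hb1, hb2, hσa, hσb, hne⟩ := h
  rcases eq_or_ne a b with rfl | hab
  · have h2 : 2 ≤ σ a := by
      have := hne rfl
      omega
    exact ⟨a, a, ha1, ha2, le_refl _, pair_le_of_two h2⟩
  · rcases le_or_gt a.val b.val with hle | hlt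
    · exact ⟨a, b, ha1, hb2, hle, pair_le_of_ne hab hσa hσb⟩
    · exact ⟨b, a, hb1, ha2, le_of_lt hlt, pair_le_of_ne hab.symm hσb hσa⟩

lemma reduce (σ : Fin d →₀ ℕ) :
    ∃ τ : Fin d →₀ ℕ, Irred τ ∧ mdeg τ = mdeg σ ∧ wt τ = wt σ ∧
      P σ - P τ ∈ gammaCumulantIdeal d := by
  suffices H : ∀ n (σ : Fin d →₀ ℕ), (d - 1) * wt σ - Phi σ = n →
      ∃ τ : Fin d →₀ ℕ, Irred τ ∧ mdeg τ = mdeg σ ∧ wt τ = wt σ ∧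
        P σ - P τ ∈ gammaCumulantIdeal d from H _ σ rfl
  intro n
  induction n using Nat.strong_induction_on with
  | _ n ih =>
    intro σ hn
    by_cases h : Irred σ
    · exact ⟨σ, h, rfl, rfl, by simpa using Ideal.zero_mem _⟩
    · obtain ⟨a, b, ha, hb, hab, hle⟩ := exists_move_of_not_irred h
      obtain ⟨σ', hP, hm, hw, hΦ⟩ := step ha hb hab hle
      have hub : Phi σ' ≤ (d - 1) * wt σ' := Phi_le σ'
      have hub0 : Phi σ ≤ (d - 1) * wt σ := Phi_le σ
      have hdec : (d - 1) * wt σ' - Phi σ' < n := by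
        rw [hw] at hub ⊢
        omega
      obtain ⟨τ, h1, h2, h3, h4⟩ := ih _ hdec σ' rfl
      refine ⟨τ, h1, h2.trans hm, h3.trans hw, ?_⟩
      have he : P σ - P τ = (P σ - P σ') + (P σ' - P τ) := by ring
      rw [he]
      exact Ideal.add_mem _ hP h4


def cmid (σ : Fin d →₀ ℕ) : ℕ :=
  ∑ i ∈ Finset.univ.filter (fun i : Fin d => i.val + 1 < d), i.val * σ i

lemma wt_split (hd : 3 ≤ d) (σ : Fin d →₀ ℕ) :
    wt σ = cmid σ + (d - 1) * σ ⟨d - 1, by omega⟩ := by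
  rw [wt, ← Finset.sum_filter_add_sum_filter_not Finset.univ (fun i : Fin d => i.val + 1 < d)]
  congr 1
  have h : Finset.univ.filter (fun i : Fin d => ¬ i.val + 1 < d)
      = {(⟨d - 1, by omega⟩ : Fin d)} := by
    ext i
    simp only [Finset.mem_filter, Finset.mem_univ, true_and, Finset.mem_singleton, Fin.ext_iff]
    have := i.isLt
    omega
  rw [h, Finset.sum_singleton]

lemma irred_struct (hd : 3 ≤ d) {σ : Fin d →₀ ℕ} (h : Irred σ) :
    cmid σ < d - 1 ∧
      ∀ i : Fin d, 1 ≤ i.val → i.val + 1 < d → σ i = if i.val = cmid σ then 1 else 0 := by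
  by_cases hM : ∃ i : Fin d, 1 ≤ i.val ∧ i.val + 1 < d ∧ 1 ≤ σ i
  · obtain ⟨i₀, h1, h2, h3⟩ := hM
    have hσi₀ : σ i₀ = 1 := (h i₀ i₀ h1 h2 h1 h2 h3 h3).2
    have hc : cmid σ = i₀.val := by
      rw [cmid, Finset.sum_eq_single_of_mem i₀ (by simp [h2])]
      · rw [hσi₀, mul_one]
      · intro j hj hji
        rcases Nat.eq_zero_or_pos j.val with hj0 | hj1
        · simp [hj0]
        · rcases Nat.eq_zero_or_pos (σ j) with hs | hs
          · simp [hs]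
          · have hjd : j.val + 1 < d := (Finset.mem_filter.mp hj).2
            exact absurd (h j i₀ hj1 hjd h1 h2 hs h3).1 hji
    refine ⟨by omega, fun i hi1 hi2 => ?_⟩
    rw [hc]
    by_cases he : i.val = i₀.val
    · have hii : i = i₀ := Fin.ext he
      simp [hii, hσi₀]
    · rw [if_neg he]
      by_contra hne
      have hs : 1 ≤ σ i := by omega
      exact he (congrArg Fin.val (h i i₀ hi1 hi2 h1 h2 hs h3).1)
  · push_neg at hM
    have hc : cmid σ = 0 := by
      rw [cmid]
      refine Finset.sum_eq_zero fun j hj => ?_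
      rcases Nat.eq_zero_or_pos j.val with hj0 | hj1
      · simp [hj0]
      · have hz : σ j = 0 := by
          have := hM j hj1 (Finset.mem_filter.mp hj).2
          omega
        simp [hz]
    refine ⟨by omega, fun i hi1 hi2 => ?_⟩
    rw [hc, if_neg (by omega)]
    have := hM i hi1 hi2
    omega

lemma irred_unique (hd : 3 ≤ d) {σ τ : Fin d →₀ ℕ} (hσ : Irred σ) (hτ : Irred τ)
    (hm : mdeg σ = mdeg τ) (hw : wt σ = wt τ) : σ = τ := by
  obtain ⟨hcσ, hsσ⟩ := irred_struct hd hσ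
  obtain ⟨hcτ, hsτ⟩ := irred_struct hd hτ
  have hws := (wt_split hd σ).symm.trans (hw.trans (wt_split hd τ))
  have e1 : ∀ (c q : ℕ), c < d - 1 → (c + (d - 1) * q) / (d - 1) = q := by
    intro c q hc
    rw [Nat.add_mul_div_left _ _ (by omega : 0 < d - 1), Nat.div_eq_of_lt hc, zero_add]
  have hq : σ (⟨d - 1, by omega⟩ : Fin d) = τ ⟨d - 1, by omega⟩ := by
    rw [← e1 (cmid σ) (σ ⟨d - 1, by omega⟩) hcσ, ← e1 (cmid τ) (τ ⟨d - 1, by omega⟩) hcτ, hws]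
  have hcc : cmid σ = cmid τ := by
    rw [hq] at hws
    omega
  ext i
  by_cases h0 : i.val = 0
  · have hmed : ∀ ρ : Fin d →₀ ℕ, mdeg ρ = ρ i + ∑ j ∈ Finset.univ.erase i, ρ j := by
      intro ρ
      rw [mdeg, ← Finset.add_sum_erase _ _ (Finset.mem_univ i)]
    have hrest : ∑ j ∈ Finset.univ.erase i, σ j = ∑ j ∈ Finset.univ.erase i, τ j := by
      refine Finset.sum_congr rfl fun j hj => ?_
      have hj0 : j ≠ i := Finset.ne_of_mem_erase hj
      have hj1 : 1 ≤ j.val := by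
        rcases Nat.eq_zero_or_pos j.val with hz | hp
        · exact absurd (Fin.ext (hz.trans h0.symm)) hj0
        · exact hp
      by_cases hjl : j.val + 1 < d
      · rw [hsσ j hj1 hjl, hsτ j hj1 hjl, hcc]
      · have hjlast : j = ⟨d - 1, by omega⟩ := Fin.ext (by have := j.isLt; simp; omega)
        rw [hjlast, hq]
    have e2 := hmed σ
    have e3 := hmed τ
    rw [hrest] at e2
    omega
  · by_cases hjl : i.val + 1 < d
    · rw [hsσ i (by omega) hjl, hsτ i (by omega) hjl, hcc]
    · have hilast : i = ⟨d - 1, by omega⟩ := Fin.ext (by have := i.isLt; simp; omega)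
      rw [hilast, hq]


lemma mono2 (a b : ℕ) : (X 0 : MvPolynomial (Fin 2) ℂ) ^ a * X 1 ^ b
    = monomial (Finsupp.single 0 a + Finsupp.single 1 b) 1 := by
  rw [X_pow_eq_monomial, X_pow_eq_monomial, monomial_mul, one_mul]

lemma ideal_le_ker : gammaCumulantIdeal d ≤ RingHom.ker (gm d).toRingHom := by
  rw [gammaCumulantIdeal, Ideal.span_le]
  rintro p ⟨s, hs, rfl⟩
  simp only [SetLike.mem_coe, RingHom.mem_ker, AlgHom.toRingHom_eq_coe, RingHom.coe_coe]
  rw [Matrix.det_fin_two]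
  simp only [Matrix.submatrix_apply, id_eq, gammaCumulantMatrix, Matrix.of_apply,
    Matrix.cons_val_zero, Matrix.cons_val_one, Matrix.head_cons]
  have key : ∀ (m k : ℕ) (hm : m < d) (hk : k < d),
      gm d ((C ((m.factorial : ℂ))⁻¹ * X ⟨m, hm⟩) * (C ((k.factorial : ℂ))⁻¹ * X ⟨k, hk⟩))
        = X 0 ^ 2 * X 1 ^ (m + k + 2) := by
    intro m k hm hk
    rw [map_mul, map_mul, map_mul, gm, aeval_C, aeval_C, aeval_X, aeval_X]
    simp only [Fin.val_mk, algebraMap_eq]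
    have e : (C ((m.factorial : ℂ))⁻¹ * (C (m.factorial : ℂ) * X (0 : Fin 2) * X 1 ^ (m + 1)))
        * (C ((k.factorial : ℂ))⁻¹ * (C (k.factorial : ℂ) * X 0 * X 1 ^ (k + 1)))
        = (C ((m.factorial : ℂ))⁻¹ * C (m.factorial : ℂ))
          * ((C ((k.factorial : ℂ))⁻¹ * C (k.factorial : ℂ))
          * ((X 0 * X 0) * (X 1 ^ (m + 1) * X 1 ^ (k + 1)))) := by ring
    rw [e, ← C_mul, ← C_mul,
      inv_mul_cancel₀ (Nat.cast_ne_zero.2 (Nat.factorial_ne_zero m) : (m.factorial:ℂ) ≠ 0),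
      inv_mul_cancel₀ (Nat.cast_ne_zero.2 (Nat.factorial_ne_zero k) : (k.factorial:ℂ) ≠ 0),
      C_1, one_mul, one_mul, ← pow_add, ← sq]
    rw [show m + 1 + (k + 1) = m + k + 2 by omega]
  rw [map_sub, key _ _ _ _, key _ _ _ _,
    show (s 0).val + ((s 1).val + 1) + 2 = (s 1).val + ((s 0).val + 1) + 2 by omega, sub_self]

lemma eval_gm (f : MvPolynomial (Fin d) ℂ) (v : Fin 2 → ℂ) :
    eval v (gm d f)
      = eval (fun i : Fin d => (i.val.factorial : ℂ) * v 0 * v 1 ^ (i.val + 1)) f := by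
  induction f using MvPolynomial.induction_on with
  | C c => simp [gm]
  | add p q hp hq => simp only [map_add, hp, hq]
  | mul_X p i hp =>
    rw [map_mul, map_mul, hp]
    rw [gm, aeval_X]
    simp

lemma ker_le_ideal (hd : 3 ≤ d) {f : MvPolynomial (Fin d) ℂ}
    (hf : gm d f = 0) : f ∈ gammaCumulantIdeal d := by
  classical
  obtain ⟨n, hn⟩ := Classical.axiomOfChoice (reduce (d := d))
  have hirr : ∀ σ, Irred (n σ) := fun σ => (hn σ).1
  have hmdeg : ∀ σ, mdeg (n σ) = mdeg σ := fun σ => (hn σ).2.1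
  have hwt : ∀ σ, wt (n σ) = wt σ := fun σ => (hn σ).2.2.1
  have hmem : ∀ σ, P σ - P (n σ) ∈ gammaCumulantIdeal d := fun σ => (hn σ).2.2.2
  set g : MvPolynomial (Fin d) ℂ :=
    ∑ σ ∈ f.support, (coeff σ f / nu σ) • P (n σ) with hg
  have hfg : f - g ∈ gammaCumulantIdeal d := by
    have hf' : f = ∑ σ ∈ f.support, (coeff σ f / nu σ) • P σ := by
      conv_lhs => rw [(f.support_sum_monomial_coeff).symm]
      refine Finset.sum_congr rfl fun σ hσ => ?_
      rw [P, smul_monomial, smul_eq_mul, div_mul_cancel₀ _ (nu_ne_zero σ)]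
    rw [hf', hg, ← Finset.sum_sub_distrib]
    refine Ideal.sum_mem _ fun σ hσ => ?_
    rw [← smul_sub, smul_eq_C_mul]
    exact Ideal.mul_mem_left _ _ (hmem σ)
  have hgker : gm d g = 0 := by
    have h1 : gm d (f - g) = 0 := ideal_le_ker hfg
    rw [map_sub, hf, zero_sub, neg_eq_zero] at h1
    exact h1
  have hcoeffg : ∀ ρ, coeff ρ g
      = ∑ σ ∈ f.support, (coeff σ f / nu σ) * (if n σ = ρ then nu ρ else 0) := by
    intro ρ
    rw [hg, coeff_sum]
    refine Finset.sum_congr rfl fun σ _ => ?_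
    rw [coeff_smul, P, coeff_monomial, smul_eq_mul]
    by_cases h : n σ = ρ
    · rw [if_pos h, if_pos h, h]
    · rw [if_neg h, if_neg h]
  have hgmg : ∀ ρ : Fin d →₀ ℕ,
      coeff (Finsupp.single 0 (mdeg ρ) + Finsupp.single 1 (mdeg ρ + wt ρ)) (gm d g)
        = ∑ σ ∈ f.support, (coeff σ f / nu σ) *
            (if (Finsupp.single (0 : Fin 2) (mdeg σ) + Finsupp.single 1 (mdeg σ + wt σ))
                = (Finsupp.single (0 : Fin 2) (mdeg ρ) + Finsupp.single 1 (mdeg ρ + wt ρ))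
              then 1 else 0) := by
    intro ρ
    rw [hg, map_sum, coeff_sum]
    refine Finset.sum_congr rfl fun σ _ => ?_
    rw [map_smul, coeff_smul, gm_P, hmdeg, hwt, mono2, coeff_monomial, smul_eq_mul]
  have hg0 : g = 0 := by
    apply MvPolynomial.ext
    intro ρ
    rw [coeff_zero, hcoeffg]
    by_cases hS : ∃ σ₀ ∈ f.support, n σ₀ = ρ
    · obtain ⟨σ₀, hσ₀s, hσ₀⟩ := hS
      have hρirr : Irred ρ := hσ₀ ▸ hirr σ₀
      have hkey : ∀ σ, (n σ = ρ) ↔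
          ((Finsupp.single (0 : Fin 2) (mdeg σ) + Finsupp.single 1 (mdeg σ + wt σ))
            = (Finsupp.single (0 : Fin 2) (mdeg ρ) + Finsupp.single 1 (mdeg ρ + wt ρ))) := by
        intro σ
        constructor
        · intro h
          have h1 : mdeg σ = mdeg ρ := by rw [← hmdeg σ, h]
          have h2 : wt σ = wt ρ := by rw [← hwt σ, h]
          rw [h1, h2]
        · intro h
          have h0 := DFunLike.congr_fun h (0 : Fin 2)
          have h1 := DFunLike.congr_fun h (1 : Fin 2)
          simp only [Finsupp.add_apply, Finsupp.single_apply, if_pos rfl] at h0 h1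
          have e0 : mdeg σ = mdeg ρ := by
            simpa using h0
          have e1 : wt σ = wt ρ := by
            simp at h1
            omega
          exact irred_unique hd (hirr σ) hρirr ((hmdeg σ).trans e0) ((hwt σ).trans e1)
      have := hgmg ρ
      rw [hgker, coeff_zero] at this
      calc ∑ σ ∈ f.support, (coeff σ f / nu σ) * (if n σ = ρ then nu ρ else 0)
          = nu ρ * ∑ σ ∈ f.support, (coeff σ f / nu σ) *
              (if (Finsupp.single (0 : Fin 2) (mdeg σ) + Finsupp.single 1 (mdeg σ + wt σ))
                  = (Finsupp.single (0 : Fin 2) (mdeg ρ) + Finsupp.single 1 (mdeg ρ + wt ρ))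
                then 1 else 0) := by
            rw [Finset.mul_sum]
            refine Finset.sum_congr rfl fun σ _ => ?_
            by_cases h : n σ = ρ
            · rw [if_pos h, if_pos ((hkey σ).1 h)]
              ring
            · rw [if_neg h, if_neg (fun hc => h ((hkey σ).2 hc))]
              ring
        _ = 0 := by rw [← this, mul_zero]
    · refine Finset.sum_eq_zero fun σ hσ => ?_
      rw [if_neg (fun h => hS ⟨σ, hσ, h⟩), mul_zero]
  have h2 := hfg
  rw [hg0, sub_zero] at h2
  exact h2

end GammaAux

/-- `I₂(K)` is prime, and equals the vanishing ideal of the image of the gamma cumulant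
parameterization `(k, θ) ↦ ((r-1)!·k·θʳ)_{r=1,…,d}`. -/


theorem gamma_cumulantVariety (d : ℕ) (hd : 3 ≤ d) :
    (gammaCumulantIdeal d).IsPrime ∧
      ∀ f : MvPolynomial (Fin d) ℂ,
        (∀ k θ : ℂ,
            eval (fun i : Fin d => (i.val.factorial : ℂ) * k * θ ^ (i.val + 1)) f = 0) ↔
          f ∈ gammaCumulantIdeal d := by
  have hker : gammaCumulantIdeal d = RingHom.ker (GammaAux.gm d).toRingHom :=
    le_antisymm GammaAux.ideal_le_ker fun f hf =>
      GammaAux.ker_le_ideal hd (by exact hf)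
  constructor
  · rw [hker]
    exact RingHom.ker_isPrime _
  · intro f
    rw [hker, RingHom.mem_ker]
    constructor
    · intro h
      have : ∀ v : Fin 2 → ℂ, eval v (GammaAux.gm d f) = eval v 0 := by
        intro v
        rw [GammaAux.eval_gm, map_zero]
        exact h (v 0) (v 1)
      exact MvPolynomial.funext this
    · intro h k θ
      have h2 := GammaAux.eval_gm f ![k, θ]
      rw [show (GammaAux.gm d) f = 0 from h, map_zero] at h2
      simpa using h2.symm
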